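/- The ℤ₅×ℤ₅ action generated by g₁ and g₂ on the Fermat quintic is fixed-point free: for all integers a, b not both divisible by 5, every nonzero z ∈ ℂ⁵ with z₀⁵+z₁⁵+z₂⁵+z₃⁵+z₄⁵ = 0, and every λ ∈ ℂ, one has g₁ᵃ(g₂ᵇ(z)) ≠ λ·z. -/

import Mathlib

/-- `ω = exp(2πi/5)`, a primitive fifth root of unity. -/
noncomputable def ω : ℂ := Complex.exp (2 * Real.pi * Complex.I / 5)

lemma ω_ne_zero : ω ≠ 0 := Complex.exp_ne_zero _

/-- `g₁(z₀,z₁,z₂,z₃,z₄) = (z₄,z₀,z₁,z₂,z₃)` as an invertible linear map of `ℂ⁵`. -/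
noncomputable def g1 : (Fin 5 → ℂ) ≃ₗ[ℂ] (Fin 5 → ℂ) where
  toFun z := fun i => z (i - 1)
  invFun z := fun i => z (i + 1)
  map_add' _ _ := rfl
  map_smul' _ _ := rfl
  left_inv z := by funext i; simp
  right_inv z := by funext i; simp

/-- `g₂(z₀,z₁,z₂,z₃,z₄) = (z₀, ω z₁, ω² z₂, ω³ z₃, ω⁴ z₄)` as an invertible linear map
of `ℂ⁵`. -/
noncomputable def g2 : (Fin 5 → ℂ) ≃ₗ[ℂ] (Fin 5 → ℂ) where
  toFun z := fun i => ω ^ (i : ℕ) * z i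
  invFun z := fun i => (ω ^ (i : ℕ))⁻¹ * z i
  map_add' a b := by funext i; simp [mul_add]
  map_smul' c a := by funext i; simp; ring
  left_inv z := by
    funext i
    exact inv_mul_cancel_left₀ (pow_ne_zero _ ω_ne_zero) _
  right_inv z := by
    funext i
    exact mul_inv_cancel_left₀ (pow_ne_zero _ ω_ne_zero) _

lemma ω_prim : IsPrimitiveRoot ω 5 := by
  have h := Complex.isPrimitiveRoot_exp 5 (by norm_num)
  have : ((5:ℕ):ℂ) = (5:ℂ) := by norm_num
  rw [this] at h
  exact h

lemma ω_zpow_one {k : ℤ} (h : (5:ℤ) ∣ k) : ω ^ k = 1 :=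
  (ω_prim.zpow_eq_one_iff_dvd k).mpr h

open Fin.CommRing in
lemma g1_zpow : ∀ (n : ℤ) (z : Fin 5 → ℂ) (i : Fin 5),
    (g1 ^ n) z i = z (i - (n : Fin 5)) := by
  intro n
  induction n using Int.induction_on with
  | zero => intro z i; simp
  | succ k ih =>
    intro z i
    rw [zpow_add_one]
    have h : ((g1 ^ (k:ℤ)) * g1) z i = (g1 ^ (k:ℤ)) (g1 z) i := rfl
    rw [h, ih]
    show z (i - ((k:ℤ):Fin 5) - 1) = _
    congr 1
    push_cast
    ring
  | pred k ih =>
    intro z i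
    rw [zpow_sub_one]
    have h : ((g1 ^ (-k:ℤ)) * g1⁻¹) z i = (g1 ^ (-k:ℤ)) (g1⁻¹ z) i := rfl
    rw [h, ih]
    show z (i - ((-k:ℤ):Fin 5) + 1) = _
    congr 1
    push_cast
    ring

lemma g2_zpow : ∀ (n : ℤ) (z : Fin 5 → ℂ) (i : Fin 5),
    (g2 ^ n) z i = ω ^ (n * (i.val:ℤ)) * z i := by
  intro n
  induction n using Int.induction_on with
  | zero => intro z i; simp
  | succ k ih =>
    intro z i
    rw [zpow_add_one]
    have h : ((g2 ^ (k:ℤ)) * g2) z i = (g2 ^ (k:ℤ)) (g2 z) i := rfl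
    rw [h, ih]
    show ω ^ ((k:ℤ) * (i.val:ℤ)) * (ω ^ (i:ℕ) * z i) = _
    rw [← zpow_natCast ω (i:ℕ), ← mul_assoc, ← zpow_add₀ ω_ne_zero]
    congr 2
    ring
  | pred k ih =>
    intro z i
    rw [zpow_sub_one]
    have h : ((g2 ^ (-k:ℤ)) * g2⁻¹) z i = (g2 ^ (-k:ℤ)) (g2⁻¹ z) i := rfl
    rw [h, ih]
    show ω ^ ((-k:ℤ) * (i.val:ℤ)) * ((ω ^ (i:ℕ))⁻¹ * z i) = _
    rw [← zpow_natCast ω (i:ℕ), ← zpow_neg, ← mul_assoc, ← zpow_add₀ ω_ne_zero]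
    congr 2
    ring


open Fin.CommRing in
/-- The `ℤ₅×ℤ₅` action generated by `g₁, g₂` is fixed-point free on the Fermat
quintic: if `a, b` are not both divisible by `5`, then `g₁ᵃ(g₂ᵇ(z))` is not a scalar
multiple of `z` for any nonzero `z` on the Fermat quintic. -/
theorem stmt_9 (a b : ℤ) (hab : ¬(5 ∣ a ∧ 5 ∣ b)) (z : Fin 5 → ℂ) (hz : z ≠ 0)
    (hFermat : z 0 ^ 5 + z 1 ^ 5 + z 2 ^ 5 + z 3 ^ 5 + z 4 ^ 5 = 0) (lam : ℂ) :
    (g1 ^ a) ((g2 ^ b) z) ≠ lam • z := by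
  intro hEq
  set a' : Fin 5 := ((a : ℤ) : Fin 5) with ha'def
  have hP : ∀ i : Fin 5, ω ^ (b * (((i - a').val : ℕ) : ℤ)) * z (i - a') = lam * z i := by
    intro i
    have h := congrFun hEq i
    rw [g1_zpow, g2_zpow] at h
    simpa using h
  obtain ⟨j, hj⟩ : ∃ j, z j ≠ 0 := Function.ne_iff.mp hz
  by_cases hA : (5:ℤ) ∣ a
  · -- a ≡ 0, so b ≢ 0
    have hb : ¬ (5:ℤ) ∣ b := fun h => hab ⟨hA, h⟩
    have ha0 : a' = 0 := by
      rw [ha'def]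
      exact (CharP.intCast_eq_zero_iff (Fin 5) 5 a).mpr hA
    rw [ha0] at hP
    simp only [sub_zero] at hP
    have hlam : ω ^ (b * ((j.val : ℕ) : ℤ)) = lam := mul_right_cancel₀ hj (hP j)
    have hv : ∀ i, i ≠ j → z i = 0 := by
      intro i hij
      by_contra h0
      have heq : ω ^ (b * ((i.val : ℕ) : ℤ)) = ω ^ (b * ((j.val : ℕ) : ℤ)) := by
        rw [hlam]
        exact mul_right_cancel₀ h0 (hP i)
      have h1 : ω ^ (b * (i.val : ℤ) - b * (j.val : ℤ)) = 1 := by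
        rw [zpow_sub₀ ω_ne_zero, heq, div_self (zpow_ne_zero _ ω_ne_zero)]
      have h2 : (5:ℤ) ∣ b * ((i.val : ℤ) - (j.val : ℤ)) := by
        have := (ω_prim.zpow_eq_one_iff_dvd _).mp h1
        convert this using 1 <;> push_cast
        ring
      have h3 : (5:ℤ) ∣ ((i.val : ℤ) - (j.val : ℤ)) :=
        (Int.Prime.dvd_mul' (by norm_num) h2).resolve_left hb
      have hi5 := i.isLt
      have hj5 := j.isLt
      have : i.val = j.val := by omega
      exact hij (Fin.ext this)
    have hsum : ∑ i, z i ^ 5 = 0 := by rw [Fin.sum_univ_five]; exact hFermat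
    rw [Finset.sum_eq_single_of_mem j (Finset.mem_univ j)
      (fun i _ hi => by rw [hv i hi]; exact zero_pow (by norm_num))] at hsum
    exact hj (pow_eq_zero_iff (by norm_num : (5:ℕ) ≠ 0) |>.mp hsum)
  · -- a ≢ 0
    have ha0 : a' ≠ 0 := fun h => hA ((CharP.intCast_eq_zero_iff (Fin 5) 5 a).mp h)
    have h55 : ∀ x y : Fin 5, x - y - y - y - y - y = x := by decide
    -- chain at j to get lam ^ 5 = 1
    have h1 := hP j
    have h2 := hP (j - a')
    have h3 := hP (j - a' - a')
    have h4 := hP (j - a' - a' - a')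
    have h5 := hP (j - a' - a' - a' - a')
    rw [h55 j a'] at h5
    set A1 := ω ^ (b * (((j - a').val : ℕ) : ℤ)) with hA1
    set A2 := ω ^ (b * (((j - a' - a').val : ℕ) : ℤ)) with hA2
    set A3 := ω ^ (b * (((j - a' - a' - a').val : ℕ) : ℤ)) with hA3
    set A4 := ω ^ (b * (((j - a' - a' - a' - a').val : ℕ) : ℤ)) with hA4
    set A5 := ω ^ (b * ((j.val : ℕ) : ℤ)) with hA5
    have hvs : ∀ (c : Fin 5), c ≠ 0 → ∀ x : Fin 5,
        (x - c).val + (x - c - c).val + (x - c - c - c).val + (x - c - c - c - c).val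
          + x.val = 10 := by decide
    have hprod : A1 * A2 * A3 * A4 * A5 = 1 := by
      rw [hA1, hA2, hA3, hA4, hA5, ← zpow_add₀ ω_ne_zero, ← zpow_add₀ ω_ne_zero,
        ← zpow_add₀ ω_ne_zero, ← zpow_add₀ ω_ne_zero]
      apply ω_zpow_one
      have h10 := hvs a' ha0 j
      have h10' : (((j - a').val : ℤ) + ((j - a' - a').val : ℤ) + ((j - a' - a' - a').val : ℤ)
          + ((j - a' - a' - a' - a').val : ℤ) + (j.val : ℤ)) = 10 := by exact_mod_cast h10
      exact ⟨2 * b, by linear_combination b * h10'⟩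
    have hchain : lam ^ 5 * z j = (A1 * A2 * A3 * A4 * A5) * z j := by
      linear_combination (-lam^4) * h1 + (-lam^3 * A1) * h2 + (-lam^2 * A1 * A2) * h3
        + (-lam * A1 * A2 * A3) * h4 + (-(A1 * A2 * A3 * A4)) * h5
    rw [hprod] at hchain
    have hlam5 : lam ^ 5 = 1 := mul_right_cancel₀ hj hchain
    -- fifth powers are shift-invariant
    have key : ∀ i : Fin 5, z (i - a') ^ 5 = z i ^ 5 := by
      intro i
      have h := congrArg (· ^ 5) (hP i)
      simp only [mul_pow] at h
      rw [hlam5, one_mul, ← zpow_natCast (ω ^ (b * (((i - a').val : ℕ) : ℤ))) 5,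
        ← zpow_mul] at h
      rw [ω_zpow_one ⟨b * (((i - a').val : ℕ) : ℤ), by ring⟩, one_mul] at h
      exact h
    have key2 : ∀ i : Fin 5, z (i - a' - a') ^ 5 = z i ^ 5 :=
      fun i => (key _).trans (key i)
    have key3 : ∀ i : Fin 5, z (i - a' - a' - a') ^ 5 = z i ^ 5 :=
      fun i => (key _).trans (key2 i)
    have key4 : ∀ i : Fin 5, z (i - a' - a' - a' - a') ^ 5 = z i ^ 5 :=
      fun i => (key _).trans (key3 i)
    have hreach : ∀ (c : Fin 5), c ≠ 0 → ∀ i : Fin 5,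
        i = 0 ∨ i - c = 0 ∨ i - c - c = 0 ∨ i - c - c - c = 0 ∨ i - c - c - c - c = 0 := by
      decide
    have hall : ∀ i : Fin 5, z i ^ 5 = z 0 ^ 5 := by
      intro i
      rcases hreach a' ha0 i with h | h | h | h | h
      · rw [h]
      · exact ((key i).symm).trans (by rw [h])
      · exact ((key2 i).symm).trans (by rw [h])
      · exact ((key3 i).symm).trans (by rw [h])
      · exact ((key4 i).symm).trans (by rw [h])
    have h5z : (5:ℂ) * z 0 ^ 5 = 0 := by
      linear_combination hFermat - hall 1 - hall 2 - hall 3 - hall 4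
    have hz0 : z 0 ^ 5 = 0 := (mul_eq_zero.mp h5z).resolve_left (by norm_num)
    have : z j ^ 5 = 0 := (hall j).trans hz0
    exact hj (pow_eq_zero_iff (by norm_num : (5:ℕ) ≠ 0) |>.mp this)
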